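/- Let ℓ ≥ 1 and n ≥ ℓ. Every single-deletion ℓ-read code is also a single-ℓ-sticky-deletion-correcting code: if C ⊆ {0,1}^n satisfies D(Tr(x)) ∩ D(Tr(y)) = ∅ for all distinct x, y ∈ C, then S_ℓ(x) ∩ S_ℓ(y) = ∅ for all distinct x, y ∈ C. -/

import Mathlib

/-- The ℓ-read vector of a binary vector `x` (as a list of Booleans): its entry at 0-based
index `i` (1-indexed `i+1`) is the Hamming weight of the window of `ℓ` consecutive
coordinates of `x` ending at 1-indexed position `i+1`, with out-of-range coordinates taken
to be `0` (`false`). -/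
def readVec (ℓ : ℕ) (x : List Bool) : List ℕ :=
  (List.range (x.length + ℓ - 1)).map fun i =>
    (((List.replicate (ℓ - 1) false ++ x ++ List.replicate (ℓ - 1) false).drop i).take ℓ).count true

/-- The single-deletion ball: all vectors obtained from `u` by deleting exactly one symbol. -/
def delBall {α : Type*} (u : List α) : Set (List α) :=
  { v | ∃ i < u.length, v = u.eraseIdx i }

/-- The single `r`-sticky-deletion ball: all vectors obtained from `u` by deleting one symbol
lying in a run of length at least `r`. -/
def stickyBall (r : ℕ) (u : List Bool) : Set (List Bool) :=
  { v | ∃ i, i + r ≤ u.length ∧ (∀ j < r, u.getD (i + j) false = u.getD i false) ∧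
      v = u.eraseIdx i }



lemma cnt_take_succ (y : List Bool) (m : ℕ) (hm : m < y.length) :
    (y.take (m+1)).count true = (y.take m).count true
      + (if y.getD m false then 1 else 0) := by
  rw [List.take_succ, List.count_append, List.getElem?_eq_getElem hm,
    List.getD_eq_getElem y false hm]
  cases h : y[m] <;> simp [List.count_cons, h]

lemma take_eraseIdx_of_le (y : List Bool) (p m : ℕ) (hp : p ≤ y.length) (h : m ≤ p) :
    (y.eraseIdx p).take m = y.take m := by
  rw [List.eraseIdx_eq_take_drop_succ, List.take_append, List.take_take]
  have h1 : m ⊓ p = m := by omega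
  have h2 : m - (y.take p).length = 0 := by
    rw [List.length_take]; omega
  simp [h1, h2]
  omega

lemma count_take_eraseIdx_ge (y : List Bool) (p m : ℕ) (hp : p < y.length) (hm : p ≤ m) :
    (y.take (m+1)).count true
      = ((y.eraseIdx p).take m).count true + (if y.getD p false then 1 else 0) := by
  have hsplit : m + 1 = p + (m - p + 1) := by omega
  rw [hsplit, List.take_add, List.drop_eq_getElem_cons hp, List.take_succ_cons,
    List.eraseIdx_eq_take_drop_succ, List.take_append, List.take_take]
  have h1 : m ⊓ p = p := by omega
  have h2 : m - (y.take p).length = m - p := by rw [List.length_take]; omega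
  rw [h1, h2, List.count_append, List.count_append, List.count_cons,
    List.getD_eq_getElem y false hp]
  cases h : y[p] <;> simp [h] <;> omega


lemma readVec_eraseIdx (ℓ : ℕ) (hℓ : 1 ≤ ℓ) (x : List Bool) (i : ℕ)
    (hi : i + ℓ ≤ x.length)
    (hrun : ∀ j < ℓ, x.getD (i+j) false = x.getD i false) :
    readVec ℓ (x.eraseIdx i) = (readVec ℓ x).eraseIdx (ℓ - 1 + i) := by
  set n := x.length with hn
  set p := ℓ - 1 + i with hpdef
  set y := List.replicate (ℓ - 1) false ++ x ++ List.replicate (ℓ - 1) false with hy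
  have hylen : y.length = (ℓ - 1) + n + (ℓ - 1) := by
    simp [hy]; omega
  have hp : p < y.length := by omega
  have hilen : i < x.length := by omega
  -- padded erased word
  have hzy : List.replicate (ℓ - 1) false ++ x.eraseIdx i ++ List.replicate (ℓ - 1) false
      = y.eraseIdx p := by
    rw [hy, List.append_assoc, List.append_assoc,
      List.eraseIdx_append_of_length_le (by simp [hpdef] : (List.replicate (ℓ-1) false).length ≤ p)]
    have : p - (List.replicate (ℓ-1) false).length = i := by simp [hpdef]
    rw [this, List.eraseIdx_append_of_lt_length hilen]
  -- run in padded word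
  have hyx : ∀ m, m < n → y.getD ((ℓ-1) + m) false = x.getD m false := by
    intro m hm
    rw [hy, List.append_assoc,
      List.getD_append_right _ _ _ _ (by simp),
      (by simp : (ℓ-1) + m - (List.replicate (ℓ-1) false).length = m),
      List.getD_append _ _ _ _ (by omega)]
  have hyrun : ∀ j < ℓ, y.getD (p + j) false = y.getD p false := by
    intro j hj
    have e1 : p + j = (ℓ-1) + (i + j) := by omega
    rw [e1, hyx _ (by omega), hrun j hj, hpdef, hyx i (by omega)]
  have hxlen' : (x.eraseIdx i).length = n - 1 := by
    rw [List.length_eraseIdx]; simp [hilen]; rfl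
  apply List.ext_getElem
  · have hplt : p < x.length + ℓ - 1 := by omega
    simp [readVec, List.length_eraseIdx, hxlen', hplt]
    omega
  · intro k h1 h2
    have hk : k < n - 1 + ℓ - 1 := by
      simpa [readVec, hxlen'] using h1
    have hrngx : (readVec ℓ x).length = n + ℓ - 1 := by simp [readVec]; rfl
    rw [List.getElem_eraseIdx]
    have lhs_eq : (readVec ℓ (x.eraseIdx i))[k]
        = (((y.eraseIdx p).drop k).take ℓ).count true := by
      simp only [readVec, List.getElem_map, List.getElem_range, hzy]
    rw [lhs_eq]
    have window : ∀ (w : List Bool) (k : ℕ),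
        (w.take (k + ℓ)).count true = (w.take k).count true
          + (((w.drop k).take ℓ)).count true := by
      intro w k
      rw [List.take_add, List.count_append]
    split
    · -- k < p : windows agree
      next hkp =>
      have rhs_eq : (readVec ℓ x)[k]'(by rw [hrngx]; omega)
          = ((y.drop k).take ℓ).count true := by
        simp only [readVec, List.getElem_map, List.getElem_range]; rfl
      rw [rhs_eq]
      have e1 := window y k
      have e2 := window (y.eraseIdx p) k
      have hzk : ((y.eraseIdx p).take k).count true = (y.take k).count true := by
        rw [take_eraseIdx_of_le y p k (le_of_lt hp) (by omega)]
      have hzkl : ((y.eraseIdx p).take (k+ℓ)).count true = (y.take (k+ℓ)).count true := by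
        rcases le_or_gt (k + ℓ) p with hle | hgt
        · rw [take_eraseIdx_of_le y p (k+ℓ) (le_of_lt hp) hle]
        · have g1 := count_take_eraseIdx_ge y p (k+ℓ) hp (le_of_lt hgt)
          have g2 := cnt_take_succ y (k+ℓ) (by omega)
          have g3 : y.getD (k+ℓ) false = y.getD p false := by
            have e : p + (k + ℓ - p) = k + ℓ := by omega
            rw [← e]; exact hyrun _ (by omega)
          rw [g3] at g2
          omega
      omega
    · -- k ≥ p : window of erased at k = window of original at k+1
      next hkp =>
      push_neg at hkp
      have rhs_eq : (readVec ℓ x)[k+1]'(by rw [hrngx]; omega)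
          = ((y.drop (k+1)).take ℓ).count true := by
        simp only [readVec, List.getElem_map, List.getElem_range]; rfl
      rw [rhs_eq]
      have e2 := window (y.eraseIdx p) k
      have e1 := window y (k+1)
      have eadd : k + 1 + ℓ = k + ℓ + 1 := by omega
      rw [eadd] at e1
      have g1 := count_take_eraseIdx_ge y p k hp hkp
      have g2 := count_take_eraseIdx_ge y p (k+ℓ) hp (by omega)
      omega

/-- Let `ℓ ≥ 1` and `n ≥ ℓ`. Every single-deletion `ℓ`-read code is also a
single-`ℓ`-sticky-deletion-correcting code: if `C ⊆ {0,1}ⁿ` satisfies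
`D(Tr(x)) ∩ D(Tr(y)) = ∅` for all distinct `x, y ∈ C`, then `S_ℓ(x) ∩ S_ℓ(y) = ∅` for all
distinct `x, y ∈ C`. -/
theorem readCode_is_stickyCode (ℓ n : ℕ) (hℓ : 1 ≤ ℓ) (hn : ℓ ≤ n) (C : Set (List Bool))
    (hlen : ∀ x ∈ C, x.length = n)
    (hcode : ∀ x ∈ C, ∀ y ∈ C, x ≠ y → delBall (readVec ℓ x) ∩ delBall (readVec ℓ y) = ∅) :
    ∀ x ∈ C, ∀ y ∈ C, x ≠ y → stickyBall ℓ x ∩ stickyBall ℓ y = ∅ := by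
  intro x hx y hy hne
  rw [Set.eq_empty_iff_forall_notMem]
  rintro v ⟨⟨i, hi, hruni, rfl⟩, ⟨j, hj, hrunj, hvy⟩⟩
  have hx1 := readVec_eraseIdx ℓ hℓ x i hi hruni
  have hy1 := readVec_eraseIdx ℓ hℓ y j hj hrunj
  have hxn : x.length = n := hlen x hx
  have hyn : y.length = n := hlen y hy
  have hmem1 : readVec ℓ (x.eraseIdx i) ∈ delBall (readVec ℓ x) := by
    refine ⟨ℓ - 1 + i, ?_, hx1⟩
    simp only [readVec, List.length_map, List.length_range]
    omega
  have hmem2 : readVec ℓ (x.eraseIdx i) ∈ delBall (readVec ℓ y) := by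
    refine ⟨ℓ - 1 + j, ?_, by rw [hvy, hy1]⟩
    simp only [readVec, List.length_map, List.length_range]
    omega
  have := hcode x hx y hy hne
  rw [Set.eq_empty_iff_forall_notMem] at this
  exact this _ ⟨hmem1, hmem2⟩
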